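/- Let p be a prime, l ≥ 1, let ψ be an additive character of ℚ_p that is trivial on pℤ_p but nontrivial on ℤ_p, and let s = (s₁, …, s_{2l}) ∈ ℤ_p^{2l}. Then λ_s(θ(g)) = λ_s(g) for every g in the pro-unipotent Iwahori subgroup I⁺ of GL_{2l}(ℤ_p) if and only if s_i + s_{2l−i} ∈ pℤ_p for every 1 ≤ i ≤ l−1. -/

import Mathlib

/-- The pro-unipotent Iwahori subgroup `I⁺` of `GL_n(ℤ_p)`: invertible matrices over `ℤ_p`
whose diagonal entries are `≡ 1 mod p` and whose below-diagonal entries are `≡ 0 mod p`. -/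
def IwahoriPlus (p : ℕ) [Fact p.Prime] (n : ℕ) (g : Matrix (Fin n) (Fin n) ℤ_[p]) : Prop :=
  IsUnit g.det ∧ (∀ i : Fin n, (p : ℤ_[p]) ∣ (g i i - 1)) ∧
    ∀ i j : Fin n, (j : ℕ) < (i : ℕ) → (p : ℤ_[p]) ∣ g i j

/-- The affine generic character `λ_s(g) = ψ(s₁g₁₂ + ⋯ + s_{n−1}g_{n−1,n} + s_n p⁻¹ g_{n,1})`
attached to `s ∈ ℤ_p^n` and an additive character `ψ` of `ℚ_p`. -/
noncomputable def affineChar (p : ℕ) [Fact p.Prime] (n : ℕ) (hn : 2 ≤ n)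
    (ψ : AddChar ℚ_[p] ℂˣ) (s : Fin n → ℤ_[p]) (g : Matrix (Fin n) (Fin n) ℤ_[p]) : ℂˣ :=
  ψ ((∑ i : Fin (n - 1),
        ((s ⟨i, by have := i.isLt; omega⟩ : ℚ_[p]) *
          ((g ⟨i, by have := i.isLt; omega⟩ ⟨(i : ℕ) + 1, by have := i.isLt; omega⟩ : ℤ_[p]) :
            ℚ_[p]))) +
      (s ⟨n - 1, by omega⟩ : ℚ_[p]) * ((p : ℚ_[p]))⁻¹ *
        ((g ⟨n - 1, by omega⟩ ⟨0, by omega⟩ : ℤ_[p]) : ℚ_[p]))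

/-- The `2l × 2l` anti-diagonal matrix `J′` whose `(i, 2l+1−i)` entry is `1` for `i ≤ l`
and `−1` for `i > l` (1-based indexing). -/
noncomputable def Jmat (p : ℕ) [Fact p.Prime] (l : ℕ) :
    Matrix (Fin (2 * l)) (Fin (2 * l)) ℤ_[p] :=
  Matrix.of fun i j =>
    if (i : ℕ) + (j : ℕ) = 2 * l - 1 then (if (i : ℕ) < l then 1 else -1) else 0

/-- The involution `θ(g) = J′⁻¹ · ᵗg⁻¹ · J′` of `GL_{2l}`. -/
noncomputable def thetaInv (p : ℕ) [Fact p.Prime] (l : ℕ)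
    (g : Matrix (Fin (2 * l)) (Fin (2 * l)) ℤ_[p]) :
    Matrix (Fin (2 * l)) (Fin (2 * l)) ℤ_[p] :=
  (Jmat p l)⁻¹ * Matrix.transpose g⁻¹ * Jmat p l


private lemma mul_inv_entry {p : ℕ} [Fact p.Prime] {n : ℕ}
    (g : Matrix (Fin n) (Fin n) ℤ_[p]) (hdet : IsUnit g.det) {i j : Fin n} (hij : i ≠ j) :
    ∑ k, g i k * g⁻¹ k j = 0 := by
  have h := congrFun (congrFun (Matrix.mul_nonsing_inv g hdet) i) j
  rw [Matrix.mul_apply] at h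
  rwa [Matrix.one_apply_ne hij] at h

private lemma inv_mul_entry {p : ℕ} [Fact p.Prime] {n : ℕ}
    (g : Matrix (Fin n) (Fin n) ℤ_[p]) (hdet : IsUnit g.det) (i j : Fin n) :
    ∑ k, g⁻¹ i k * g k j = (1 : Matrix (Fin n) (Fin n) ℤ_[p]) i j := by
  have h := congrFun (congrFun (Matrix.nonsing_inv_mul g hdet) i) j
  rwa [Matrix.mul_apply] at h

private lemma inv_below {p : ℕ} [Fact p.Prime] {n : ℕ}
    (g : Matrix (Fin n) (Fin n) ℤ_[p]) (hg : IwahoriPlus p n g) :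
    ∀ i j : Fin n, (j : ℕ) < (i : ℕ) → (p : ℤ_[p]) ∣ g⁻¹ i j := by
  obtain ⟨hdet, hdiag, hbelow⟩ := hg
  suffices H : ∀ m : ℕ, ∀ i j : Fin n, (j:ℕ) < m → (j:ℕ) < (i:ℕ) → (p:ℤ_[p]) ∣ g⁻¹ i j by
    intro i j h; exact H ((j:ℕ)+1) i j (Nat.lt_succ_self _) h
  intro m
  induction m with
  | zero => intro i j h; omega
  | succ m IH =>
    intro i j hjm hji
    rcases Nat.lt_or_ge (j:ℕ) m with h | h
    · exact IH i j h hji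
    · have key := inv_mul_entry g hdet i j
      rw [Matrix.one_apply_ne (Fin.ne_of_val_ne (by omega))] at key
      have hsplit : ∑ k, g⁻¹ i k * g k j
          = g⁻¹ i j * g j j + ∑ k ∈ Finset.univ.erase j, g⁻¹ i k * g k j :=
        (Finset.add_sum_erase _ _ (Finset.mem_univ j)).symm
      have hrest : (p:ℤ_[p]) ∣ ∑ k ∈ Finset.univ.erase j, g⁻¹ i k * g k j := by
        refine Finset.dvd_sum fun k hk => ?_
        have hkj : k ≠ j := (Finset.mem_erase.mp hk).1
        rcases Nat.lt_or_ge (k:ℕ) (j:ℕ) with hlt | hge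
        · exact Dvd.dvd.mul_right (IH i k (by omega) (by omega)) _
        · have hgt : (j:ℕ) < (k:ℕ) := by
            rcases Nat.lt_or_ge (j:ℕ) (k:ℕ) with h' | h'
            · exact h'
            · exact absurd (Fin.ext (by omega)) hkj
          exact Dvd.dvd.mul_left (hbelow k j hgt) _
      have h1 : (p:ℤ_[p]) ∣ g⁻¹ i j * g j j := by
        have e : g⁻¹ i j * g j j = -∑ k ∈ Finset.univ.erase j, g⁻¹ i k * g k j := by
          rw [hsplit] at key; linear_combination key
        rw [e]; exact dvd_neg.mpr hrest
      have e2 : g⁻¹ i j = g⁻¹ i j * g j j - g⁻¹ i j * (g j j - 1) := by ring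
      rw [e2]
      exact dvd_sub h1 (Dvd.dvd.mul_left (hdiag j) _)

private lemma inv_diag {p : ℕ} [Fact p.Prime] {n : ℕ}
    (g : Matrix (Fin n) (Fin n) ℤ_[p]) (hg : IwahoriPlus p n g) :
    ∀ j : Fin n, (p : ℤ_[p]) ∣ (g⁻¹ j j - 1) := by
  intro j
  obtain ⟨hdet, hdiag, hbelow⟩ := hg
  have key := inv_mul_entry g hdet j j
  rw [Matrix.one_apply_eq] at key
  have hsplit : ∑ k, g⁻¹ j k * g k j
      = g⁻¹ j j * g j j + ∑ k ∈ Finset.univ.erase j, g⁻¹ j k * g k j :=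
    (Finset.add_sum_erase _ _ (Finset.mem_univ j)).symm
  have hrest : (p:ℤ_[p]) ∣ ∑ k ∈ Finset.univ.erase j, g⁻¹ j k * g k j := by
    refine Finset.dvd_sum fun k hk => ?_
    have hkj : k ≠ j := (Finset.mem_erase.mp hk).1
    rcases Nat.lt_or_ge (k:ℕ) (j:ℕ) with hlt | hge
    · exact Dvd.dvd.mul_right (inv_below g ⟨hdet, hdiag, hbelow⟩ j k hlt) _
    · have hgt : (j:ℕ) < (k:ℕ) := by
        rcases Nat.lt_or_ge (j:ℕ) (k:ℕ) with h' | h'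
        · exact h'
        · exact absurd (Fin.ext (by omega)) hkj
      exact Dvd.dvd.mul_left (hbelow k j hgt) _
  have e : g⁻¹ j j - 1 = -(∑ k ∈ Finset.univ.erase j, g⁻¹ j k * g k j)
      - g⁻¹ j j * (g j j - 1) := by
    rw [hsplit] at key; linear_combination key
  rw [e]
  exact dvd_sub (dvd_neg.mpr hrest) (Dvd.dvd.mul_left (hdiag j) _)

private lemma inv_superdiag {p : ℕ} [Fact p.Prime] {n : ℕ}
    (g : Matrix (Fin n) (Fin n) ℤ_[p]) (hg : IwahoriPlus p n g)
    (i j : Fin n) (hij : (j:ℕ) = (i:ℕ) + 1) :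
    (p : ℤ_[p]) ∣ (g⁻¹ i j + g i j) := by
  obtain ⟨hdet, hdiag, hbelow⟩ := hg
  have key := mul_inv_entry g hdet (i := i) (j := j) (Fin.ne_of_val_ne (by omega))
  have hji : j ∈ Finset.univ.erase i := Finset.mem_erase.mpr ⟨Fin.ne_of_val_ne (by omega), Finset.mem_univ _⟩
  have hsplit : ∑ k, g i k * g⁻¹ k j
      = g i i * g⁻¹ i j + (g i j * g⁻¹ j j
        + ∑ k ∈ (Finset.univ.erase i).erase j, g i k * g⁻¹ k j) := by
    rw [← Finset.add_sum_erase _ (fun k => g i k * g⁻¹ k j) (Finset.mem_univ i),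
      ← Finset.add_sum_erase _ (fun k => g i k * g⁻¹ k j) hji]
  have hrest : (p:ℤ_[p]) ∣ ∑ k ∈ (Finset.univ.erase i).erase j, g i k * g⁻¹ k j := by
    refine Finset.dvd_sum fun k hk => ?_
    have hkj : k ≠ j := (Finset.mem_erase.mp hk).1
    have hki : k ≠ i := (Finset.mem_erase.mp (Finset.mem_erase.mp hk).2).1
    rcases Nat.lt_or_ge (k:ℕ) (i:ℕ) with hlt | hge
    · exact Dvd.dvd.mul_right (hbelow i k hlt) _
    · have hgt : (j:ℕ) < (k:ℕ) := by
        have h1 : (i:ℕ) ≠ (k:ℕ) := fun e => hki (Fin.ext e.symm)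
        have h2 : (j:ℕ) ≠ (k:ℕ) := fun e => hkj (Fin.ext e.symm)
        omega
      exact Dvd.dvd.mul_left (inv_below g ⟨hdet, hdiag, hbelow⟩ k j hgt) _
  have e : g⁻¹ i j + g i j =
      -(∑ k ∈ (Finset.univ.erase i).erase j, g i k * g⁻¹ k j)
      - (g i i - 1) * g⁻¹ i j - g i j * (g⁻¹ j j - 1) := by
    rw [hsplit] at key; linear_combination key
  rw [e]
  exact dvd_sub (dvd_sub (dvd_neg.mpr hrest) (Dvd.dvd.mul_right (hdiag i) _))
    (Dvd.dvd.mul_left (inv_diag g ⟨hdet, hdiag, hbelow⟩ j) _)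

private lemma inv_corner {p : ℕ} [Fact p.Prime] {n : ℕ} (hn : 2 ≤ n)
    (g : Matrix (Fin n) (Fin n) ℤ_[p]) (hg : IwahoriPlus p n g) :
    (p : ℤ_[p]) * (p : ℤ_[p]) ∣
      (g⁻¹ ⟨n-1, by omega⟩ ⟨0, by omega⟩ + g ⟨n-1, by omega⟩ ⟨0, by omega⟩) := by
  obtain ⟨hdet, hdiag, hbelow⟩ := hg
  set i : Fin n := ⟨n-1, by omega⟩ with hi
  set j : Fin n := ⟨0, by omega⟩ with hj
  have hvi : (i:ℕ) = n-1 := rfl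
  have hvj : (j:ℕ) = 0 := rfl
  have key := mul_inv_entry g hdet (i := i) (j := j) (Fin.ne_of_val_ne (by omega))
  have hji : j ∈ Finset.univ.erase i := Finset.mem_erase.mpr ⟨Fin.ne_of_val_ne (by omega), Finset.mem_univ _⟩
  have hsplit : ∑ k, g i k * g⁻¹ k j
      = g i i * g⁻¹ i j + (g i j * g⁻¹ j j
        + ∑ k ∈ (Finset.univ.erase i).erase j, g i k * g⁻¹ k j) := by
    rw [← Finset.add_sum_erase _ (fun k => g i k * g⁻¹ k j) (Finset.mem_univ i),
      ← Finset.add_sum_erase _ (fun k => g i k * g⁻¹ k j) hji]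
  have hrest : (p:ℤ_[p]) * (p:ℤ_[p]) ∣ ∑ k ∈ (Finset.univ.erase i).erase j, g i k * g⁻¹ k j := by
    refine Finset.dvd_sum fun k hk => ?_
    have hkj : k ≠ j := (Finset.mem_erase.mp hk).1
    have hki : k ≠ i := (Finset.mem_erase.mp (Finset.mem_erase.mp hk).2).1
    have h1 : (k:ℕ) < (i:ℕ) := by
      have := k.isLt
      have h2 : (k:ℕ) ≠ (i:ℕ) := fun e => hki (Fin.ext e)
      omega
    have h2 : (j:ℕ) < (k:ℕ) := by
      have h3 : (k:ℕ) ≠ (j:ℕ) := fun e => hkj (Fin.ext e)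
      omega
    exact mul_dvd_mul (hbelow i k h1) (inv_below g ⟨hdet, hdiag, hbelow⟩ k j h2)
  obtain ⟨a, ha⟩ := hdiag i
  obtain ⟨b, hb⟩ := inv_diag g ⟨hdet, hdiag, hbelow⟩ j
  obtain ⟨c, hc⟩ := hbelow i j (by omega)
  obtain ⟨d, hd⟩ := inv_below g ⟨hdet, hdiag, hbelow⟩ i j (by omega)
  obtain ⟨e, he⟩ := hrest
  refine ⟨-(a*d) - c*b - e, ?_⟩
  rw [hsplit] at key
  have ha' : g i i = 1 + (p:ℤ_[p]) * a := by linear_combination ha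
  have hb' : g⁻¹ j j = 1 + (p:ℤ_[p]) * b := by linear_combination hb
  rw [ha', hb', hc, hd] at key
  rw [hc, hd]
  linear_combination key - he

private noncomputable def epsz (p : ℕ) [Fact p.Prime] (l : ℕ) (i : Fin (2*l)) : ℤ_[p] :=
  if (i:ℕ) < l then 1 else -1

private def sigz (l : ℕ) (i : Fin (2*l)) : Fin (2*l) :=
  ⟨2*l-1-(i:ℕ), by have := i.isLt; omega⟩

private lemma sigz_sigz (l : ℕ) (i : Fin (2*l)) : sigz l (sigz l i) = i := by
  have := i.isLt
  apply Fin.ext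
  simp only [sigz, Fin.val_mk]
  omega

private lemma epsz_mul_self (p : ℕ) [Fact p.Prime] (l : ℕ) (i : Fin (2*l)) :
    epsz p l i * epsz p l i = 1 := by
  simp only [epsz]; split <;> norm_num

private lemma epsz_sigz (p : ℕ) [Fact p.Prime] (l : ℕ) (i : Fin (2*l)) :
    epsz p l (sigz l i) = -(epsz p l i) := by
  have hlt := i.isLt
  rcases Nat.lt_or_ge (i:ℕ) l with h | h
  · have h1 : ¬ ((sigz l i : ℕ) < l) := by simp only [sigz, Fin.val_mk]; omega
    simp only [epsz]
    rw [if_neg h1, if_pos h]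
  · have h1 : (sigz l i : ℕ) < l := by simp only [sigz, Fin.val_mk]; omega
    simp only [epsz]
    rw [if_pos h1, if_neg (by omega), neg_neg]

private lemma Jmat_apply' (p : ℕ) [Fact p.Prime] (l : ℕ) (i j : Fin (2*l)) :
    Jmat p l i j = if j = sigz l i then epsz p l i else 0 := by
  have hi := i.isLt; have hj := j.isLt
  show (if (i:ℕ) + (j:ℕ) = 2*l-1 then (if (i:ℕ) < l then (1:ℤ_[p]) else -1) else 0) = _
  by_cases h : (i:ℕ) + (j:ℕ) = 2*l-1
  · have he : j = sigz l i := Fin.ext (by simp only [sigz, Fin.val_mk]; omega)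
    rw [if_pos h, if_pos he]
    rfl
  · have hne : j ≠ sigz l i := by
      intro e
      have hv := congrArg Fin.val e
      simp only [sigz, Fin.val_mk] at hv
      omega
    rw [if_neg h, if_neg hne]

private lemma J_mul_apply {p : ℕ} [Fact p.Prime] {l : ℕ}
    (A : Matrix (Fin (2*l)) (Fin (2*l)) ℤ_[p]) (i j : Fin (2*l)) :
    (Jmat p l * A) i j = epsz p l i * A (sigz l i) j := by
  rw [Matrix.mul_apply, Finset.sum_eq_single (sigz l i)]
  · rw [Jmat_apply', if_pos rfl]
  · intro k _ hk
    rw [Jmat_apply', if_neg hk, zero_mul]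
  · intro h; exact absurd (Finset.mem_univ _) h

private lemma mul_J_apply {p : ℕ} [Fact p.Prime] {l : ℕ}
    (A : Matrix (Fin (2*l)) (Fin (2*l)) ℤ_[p]) (i j : Fin (2*l)) :
    (A * Jmat p l) i j = epsz p l (sigz l j) * A i (sigz l j) := by
  rw [Matrix.mul_apply, Finset.sum_eq_single (sigz l j)]
  · rw [Jmat_apply', sigz_sigz, if_pos rfl, mul_comm]
  · intro k _ hk
    have hne : j ≠ sigz l k := by
      intro e
      exact hk (by rw [e, sigz_sigz])
    rw [Jmat_apply', if_neg hne, mul_zero]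
  · intro h; exact absurd (Finset.mem_univ _) h

private lemma Jmat_inv (p : ℕ) [Fact p.Prime] (l : ℕ) :
    (Jmat p l)⁻¹ = -(Jmat p l) := by
  apply Matrix.inv_eq_left_inv
  ext i j
  rw [Matrix.neg_mul, Matrix.neg_apply, J_mul_apply, Jmat_apply', sigz_sigz]
  by_cases h : j = i
  · subst h
    rw [if_pos rfl, Matrix.one_apply_eq, epsz_sigz]
    have := epsz_mul_self p l j
    linear_combination this
  · rw [if_neg h, Matrix.one_apply_ne (Ne.symm h), mul_zero, neg_zero]

private lemma theta_apply {p : ℕ} [Fact p.Prime] {l : ℕ}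
    (g : Matrix (Fin (2*l)) (Fin (2*l)) ℤ_[p]) (i j : Fin (2*l)) :
    thetaInv p l g i j = epsz p l i * epsz p l j * g⁻¹ (sigz l j) (sigz l i) := by
  rw [thetaInv, Jmat_inv, mul_J_apply, Matrix.neg_mul, Matrix.neg_apply, J_mul_apply,
    Matrix.transpose_apply, epsz_sigz]
  ring

private def loIx (l : ℕ) (i : Fin (2*l-1)) : Fin (2*l) :=
  ⟨(i:ℕ), by have := i.isLt; omega⟩

private def hiIx (l : ℕ) (i : Fin (2*l-1)) : Fin (2*l) :=
  ⟨(i:ℕ)+1, by have := i.isLt; omega⟩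

private def tauIx (l : ℕ) (i : Fin (2*l-1)) : Fin (2*l-1) :=
  ⟨2*l-2-(i:ℕ), by have := i.isLt; omega⟩

private lemma tauIx_tauIx (l : ℕ) (i : Fin (2*l-1)) : tauIx l (tauIx l i) = i := by
  have := i.isLt
  apply Fin.ext
  simp only [tauIx, Fin.val_mk]
  omega

private lemma tauIx_bijective (l : ℕ) : Function.Bijective (tauIx l) :=
  Function.Involutive.bijective (tauIx_tauIx l)

private noncomputable def EEz (p : ℕ) [Fact p.Prime] (l : ℕ) (i : Fin (2*l-1)) : ℤ_[p] :=
  if (i:ℕ) = l-1 then -1 else 1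

private lemma EEz_tauIx (p : ℕ) [Fact p.Prime] (l : ℕ) (i : Fin (2*l-1)) :
    EEz p l (tauIx l i) = EEz p l i := by
  have := i.isLt
  unfold EEz
  have ht : ((tauIx l i : Fin (2*l-1)) : ℕ) = 2*l-2-(i:ℕ) := rfl
  by_cases h : (i:ℕ) = l-1
  · rw [if_pos (by omega), if_pos h]
  · rw [if_neg (by omega), if_neg h]

private noncomputable def ccz (p : ℕ) [Fact p.Prime] (l : ℕ) (s : Fin (2*l) → ℤ_[p])
    (i : Fin (2*l-1)) : ℤ_[p] :=
  if (i:ℕ) = l-1 then 0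
  else -(s (loIx l i) + s (loIx l (tauIx l i)))

private noncomputable def SSz (p : ℕ) [Fact p.Prime] (l : ℕ) (s : Fin (2*l) → ℤ_[p])
    (g : Matrix (Fin (2*l)) (Fin (2*l)) ℤ_[p]) : ℤ_[p] :=
  ∑ i : Fin (2*l-1), ccz p l s i * g (loIx l i) (hiIx l i)

private lemma theta_superdiag {p : ℕ} [Fact p.Prime] {l : ℕ} (hl : 1 ≤ l)
    (g : Matrix (Fin (2*l)) (Fin (2*l)) ℤ_[p]) (i : Fin (2*l-1)) :
    thetaInv p l g (loIx l i) (hiIx l i)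
      = EEz p l i * g⁻¹ (loIx l (tauIx l i)) (hiIx l (tauIx l i)) := by
  have hil := i.isLt
  rw [theta_apply]
  have e1 : sigz l (hiIx l i) = loIx l (tauIx l i) := by
    apply Fin.ext
    simp only [sigz, loIx, hiIx, tauIx, Fin.val_mk]
    omega
  have e2 : sigz l (loIx l i) = hiIx l (tauIx l i) := by
    apply Fin.ext
    simp only [sigz, loIx, hiIx, tauIx, Fin.val_mk]
    omega
  rw [e1, e2]
  have e3 : epsz p l (loIx l i) * epsz p l (hiIx l i) = EEz p l i := by
    unfold epsz EEz
    have hlo : ((loIx l i : Fin (2*l)) : ℕ) = (i:ℕ) := rfl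
    have hhi : ((hiIx l i : Fin (2*l)) : ℕ) = (i:ℕ) + 1 := rfl
    by_cases h : (i:ℕ) = l-1
    · rw [if_pos h, if_pos (by omega), if_neg (by omega)]
      norm_num
    · by_cases h2 : (i:ℕ) < l-1
      · rw [if_neg h, if_pos (by omega), if_pos (by omega), one_mul]
      · rw [if_neg h, if_neg (by omega), if_neg (by omega)]
        norm_num
  rw [← e3]

private lemma theta_corner {p : ℕ} [Fact p.Prime] {l : ℕ} (hl : 1 ≤ l)
    (g : Matrix (Fin (2*l)) (Fin (2*l)) ℤ_[p]) :
    thetaInv p l g ⟨2*l-1, by omega⟩ ⟨0, by omega⟩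
      = -(g⁻¹ ⟨2*l-1, by omega⟩ ⟨0, by omega⟩) := by
  rw [theta_apply]
  have e0 : sigz l ⟨0, by omega⟩ = ⟨2*l-1, by omega⟩ := by
    apply Fin.ext; simp only [sigz, Fin.val_mk]; omega
  have e1 : sigz l ⟨2*l-1, by omega⟩ = ⟨0, by omega⟩ := by
    apply Fin.ext; simp only [sigz, Fin.val_mk]; omega
  rw [e0, e1]
  have h1 : epsz p l ⟨2*l-1, by omega⟩ = -1 := by
    simp only [epsz, Fin.val_mk]; rw [if_neg (by omega)]
  have h2 : epsz p l ⟨0, by omega⟩ = 1 := by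
    simp only [epsz, Fin.val_mk]; rw [if_pos (by omega)]
  rw [h1, h2]
  ring
private lemma affineChar_unf (p : ℕ) [Fact p.Prime] (l : ℕ) (hl : 1 ≤ l)
    (ψ : AddChar ℚ_[p] ℂˣ) (s : Fin (2*l) → ℤ_[p])
    (X : Matrix (Fin (2*l)) (Fin (2*l)) ℤ_[p]) :
    affineChar p (2*l) (by linarith) ψ s X
      = ψ ((∑ i : Fin (2*l-1),
            ((s (loIx l i) : ℚ_[p]) * ((X (loIx l i) (hiIx l i) : ℤ_[p]) : ℚ_[p])))
          + (s ⟨2*l-1, by omega⟩ : ℚ_[p]) * ((p : ℚ_[p]))⁻¹ *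
            ((X ⟨2*l-1, by omega⟩ ⟨0, by omega⟩ : ℤ_[p]) : ℚ_[p])) := rfl

private lemma coe_sum_prod (p : ℕ) [Fact p.Prime] (m : ℕ) (f h : Fin m → ℤ_[p]) :
    (∑ i : Fin m, ((f i : ℚ_[p]) * (h i : ℚ_[p])))
      = ((∑ i : Fin m, f i * h i : ℤ_[p]) : ℚ_[p]) := by
  refine (Finset.sum_congr rfl (fun i _ => ?_)).trans
    (map_sum (PadicInt.Coe.ringHom) (fun i => f i * h i) Finset.univ).symm
  exact (map_mul (PadicInt.Coe.ringHom) (f i) (h i)).symm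

private lemma affineChar_theta (p : ℕ) [Fact p.Prime] (l : ℕ) (hl : 1 ≤ l)
    (ψ : AddChar ℚ_[p] ℂˣ) (hψ : ∀ x : ℤ_[p], ψ ((p : ℚ_[p]) * (x : ℚ_[p])) = 1)
    (s : Fin (2*l) → ℤ_[p]) (g : Matrix (Fin (2*l)) (Fin (2*l)) ℤ_[p])
    (hg : IwahoriPlus p (2*l) g) :
    affineChar p (2*l) (by linarith) ψ s (thetaInv p l g) =
      affineChar p (2*l) (by linarith) ψ s g * ψ ((SSz p l s g : ℚ_[p])) := by
  obtain ⟨hdet, hdiag, hbelow⟩ := hg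
  -- superdiagonal sum congruence over ℤ_[p]
  have hsum : (p:ℤ_[p]) ∣
      ((∑ i : Fin (2*l-1), s (loIx l i) * thetaInv p l g (loIx l i) (hiIx l i))
        - ((∑ i : Fin (2*l-1), s (loIx l i) * g (loIx l i) (hiIx l i)) + SSz p l s g)) := by
    have e1 : ∑ i : Fin (2*l-1), s (loIx l i) * thetaInv p l g (loIx l i) (hiIx l i)
        = ∑ i : Fin (2*l-1), s (loIx l (tauIx l i)) * (EEz p l i * g⁻¹ (loIx l i) (hiIx l i)) := by
      calc ∑ i : Fin (2*l-1), s (loIx l i) * thetaInv p l g (loIx l i) (hiIx l i)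
          = ∑ i : Fin (2*l-1),
              s (loIx l i) * (EEz p l i * g⁻¹ (loIx l (tauIx l i)) (hiIx l (tauIx l i))) :=
            Finset.sum_congr rfl (fun i _ => by rw [theta_superdiag hl g i])
        _ = ∑ i : Fin (2*l-1),
              s (loIx l (tauIx l i)) * (EEz p l i * g⁻¹ (loIx l i) (hiIx l i)) := by
            refine Fintype.sum_bijective (tauIx l) (tauIx_bijective l) _ _ (fun i => ?_)
            rw [tauIx_tauIx, EEz_tauIx]
    rw [e1, SSz, ← Finset.sum_add_distrib, ← Finset.sum_sub_distrib]
    refine Finset.dvd_sum (fun i _ => ?_)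
    have hsup : (hiIx l i : ℕ) = (loIx l i : ℕ) + 1 := rfl
    obtain ⟨d, hd⟩ := inv_superdiag g ⟨hdet, hdiag, hbelow⟩ (loIx l i) (hiIx l i) hsup
    by_cases h : (i:ℕ) = l-1
    · have htau : tauIx l i = i := by
        have := i.isLt; apply Fin.ext; simp only [tauIx, Fin.val_mk]; omega
      rw [htau, EEz, if_pos h, ccz, if_pos h]
      exact ⟨-(s (loIx l i)) * d, by linear_combination (-(s (loIx l i))) * hd⟩
    · rw [EEz, if_neg h, ccz, if_neg h]
      exact ⟨s (loIx l (tauIx l i)) * d, by linear_combination (s (loIx l (tauIx l i))) * hd⟩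
  obtain ⟨u, hu⟩ := hsum
  obtain ⟨v, hv⟩ := inv_corner (by omega : 2 ≤ 2*l) g ⟨hdet, hdiag, hbelow⟩
  have hpne : (p:ℚ_[p]) ≠ 0 := by exact_mod_cast (Fact.out : p.Prime).ne_zero
  -- coerced versions
  have huQ : ((∑ i : Fin (2*l-1), s (loIx l i) * thetaInv p l g (loIx l i) (hiIx l i) : ℤ_[p]) : ℚ_[p])
      = ((∑ i : Fin (2*l-1), s (loIx l i) * g (loIx l i) (hiIx l i) : ℤ_[p]) : ℚ_[p])
        + ((SSz p l s g : ℤ_[p]) : ℚ_[p]) + (p:ℚ_[p]) * (u:ℚ_[p]) := by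
    have e : (∑ i : Fin (2*l-1), s (loIx l i) * thetaInv p l g (loIx l i) (hiIx l i))
        = (∑ i : Fin (2*l-1), s (loIx l i) * g (loIx l i) (hiIx l i)) + SSz p l s g
          + (p:ℤ_[p]) * u := by linear_combination hu
    rw [e]
    push_cast
    ring
  have hθcQ : ((thetaInv p l g ⟨2*l-1, by omega⟩ ⟨0, by omega⟩ : ℤ_[p]) : ℚ_[p])
      = ((g ⟨2*l-1, by omega⟩ ⟨0, by omega⟩ : ℤ_[p]) : ℚ_[p])
        - (p:ℚ_[p]) * ((p:ℚ_[p]) * (v:ℚ_[p])) := by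
    rw [theta_corner hl g]
    have e : -(g⁻¹ ⟨2*l-1, by omega⟩ ⟨0, by omega⟩ : ℤ_[p])
        = g ⟨2*l-1, by omega⟩ ⟨0, by omega⟩ - (p:ℤ_[p]) * ((p:ℤ_[p]) * v) := by
      linear_combination - hv
    rw [e]
    push_cast
    ring
  rw [affineChar_unf p l hl ψ s (thetaInv p l g), affineChar_unf p l hl ψ s g]
  rw [coe_sum_prod p (2*l-1) (fun i => s (loIx l i))
        (fun i => thetaInv p l g (loIx l i) (hiIx l i)),
      coe_sum_prod p (2*l-1) (fun i => s (loIx l i)) (fun i => g (loIx l i) (hiIx l i))]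
  rw [huQ, hθcQ]
  have earg : (((∑ i : Fin (2*l-1), s (loIx l i) * g (loIx l i) (hiIx l i) : ℤ_[p]) : ℚ_[p])
        + ((SSz p l s g : ℤ_[p]) : ℚ_[p]) + (p:ℚ_[p]) * (u:ℚ_[p]))
      + (s ⟨2*l-1, by omega⟩ : ℚ_[p]) * ((p : ℚ_[p]))⁻¹ *
        (((g ⟨2*l-1, by omega⟩ ⟨0, by omega⟩ : ℤ_[p]) : ℚ_[p])
          - (p:ℚ_[p]) * ((p:ℚ_[p]) * (v:ℚ_[p])))
      = ((((∑ i : Fin (2*l-1), s (loIx l i) * g (loIx l i) (hiIx l i) : ℤ_[p]) : ℚ_[p])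
          + (s ⟨2*l-1, by omega⟩ : ℚ_[p]) * ((p : ℚ_[p]))⁻¹ *
            ((g ⟨2*l-1, by omega⟩ ⟨0, by omega⟩ : ℤ_[p]) : ℚ_[p]))
          + ((SSz p l s g : ℤ_[p]) : ℚ_[p]))
        + (p:ℚ_[p]) * (((u - s ⟨2*l-1, by omega⟩ * v : ℤ_[p]) : ℤ_[p]) : ℚ_[p]) := by
    push_cast
    field_simp
    ring
  rw [earg, AddChar.map_add_eq_mul, hψ (u - s ⟨2*l-1, by omega⟩ * v), mul_one,
    AddChar.map_add_eq_mul]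
private noncomputable def elemMat (p : ℕ) [Fact p.Prime] (n : ℕ) (R C : Fin n) (x : ℤ_[p]) :
    Matrix (Fin n) (Fin n) ℤ_[p] :=
  Matrix.of fun r c => if r = R ∧ c = C then x else 0

private lemma elemMat_mul_self {p : ℕ} [Fact p.Prime] {n : ℕ} (R C : Fin n) (hRC : R ≠ C)
    (x y : ℤ_[p]) : elemMat p n R C x * elemMat p n R C y = 0 := by
  ext r c
  rw [Matrix.mul_apply, Matrix.zero_apply]
  refine Finset.sum_eq_zero (fun k _ => ?_)
  by_cases h1 : k = R ∧ c = C
  · have h2 : ¬(r = R ∧ k = C) := by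
      rintro ⟨-, h3⟩
      exact hRC (h1.1 ▸ h3 ▸ rfl)
    simp only [elemMat, Matrix.of_apply, if_neg h2, zero_mul]
  · simp only [elemMat, Matrix.of_apply, if_neg h1, mul_zero]

private lemma elemMat_add_neg {p : ℕ} [Fact p.Prime] {n : ℕ} (R C : Fin n) (x : ℤ_[p]) :
    elemMat p n R C (-x) + elemMat p n R C x = 0 := by
  ext r c
  simp only [elemMat, Matrix.of_apply, Matrix.add_apply, Matrix.zero_apply]
  by_cases h : r = R ∧ c = C
  · rw [if_pos h, if_pos h]; ring
  · rw [if_neg h, if_neg h]; ring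

private lemma iwahori_one_add_elem {p : ℕ} [Fact p.Prime] {n : ℕ} (R C : Fin n)
    (hRC : (R:ℕ) < (C:ℕ)) (x : ℤ_[p]) : IwahoriPlus p n (1 + elemMat p n R C x) := by
  have hne : R ≠ C := Fin.ne_of_val_ne (by omega)
  refine ⟨?_, ?_, ?_⟩
  · refine Matrix.isUnit_det_of_left_inverse (B := 1 + elemMat p n R C (-x)) ?_
    have h0 := elemMat_mul_self R C hne (-x) x
    have hadd := elemMat_add_neg R C x
    calc (1 + elemMat p n R C (-x)) * (1 + elemMat p n R C x)
        = 1 + (elemMat p n R C (-x) + elemMat p n R C x)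
          + elemMat p n R C (-x) * elemMat p n R C x := by noncomm_ring
      _ = 1 := by rw [h0, hadd, add_zero, add_zero]
  · intro i
    have h1 : ¬(i = R ∧ i = C) := by rintro ⟨h2, h3⟩; exact hne (h2 ▸ h3 ▸ rfl)
    simp only [Matrix.add_apply, Matrix.one_apply_eq, elemMat, Matrix.of_apply, if_neg h1]
    simp
  · intro i j hji
    have h1 : ¬(i = R ∧ j = C) := by
      rintro ⟨h2, h3⟩
      rw [h2, h3] at hji
      omega
    simp only [Matrix.add_apply, Matrix.one_apply_ne (Fin.ne_of_val_ne (by omega : (i:ℕ) ≠ (j:ℕ))),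
      elemMat, Matrix.of_apply, if_neg h1]
    simp

private lemma one_add_elem_offdiag {p : ℕ} [Fact p.Prime] {n : ℕ} (R C : Fin n)
    (x : ℤ_[p]) (r c : Fin n) (hrc : r ≠ c) :
    (1 + elemMat p n R C x) r c = if r = R ∧ c = C then x else 0 := by
  simp only [Matrix.add_apply, Matrix.one_apply_ne hrc, elemMat, Matrix.of_apply, zero_add]
/-- For `ψ` trivial on `pℤ_p` but nontrivial on `ℤ_p`, the affine generic character `λ_s`
is `θ`-invariant on `I⁺` if and only if `s_i + s_{2l−i} ∈ pℤ_p` for all `1 ≤ i ≤ l−1`. -/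
theorem affineChar_theta_invariant_iff (p : ℕ) [Fact p.Prime] (l : ℕ) (hl : 1 ≤ l)
    (ψ : AddChar ℚ_[p] ℂˣ) (hψ : ∀ x : ℤ_[p], ψ ((p : ℚ_[p]) * (x : ℚ_[p])) = 1)
    (hψ' : ∃ x : ℤ_[p], ψ (x : ℚ_[p]) ≠ 1)
    (s : Fin (2 * l) → ℤ_[p]) :
    (∀ g : Matrix (Fin (2 * l)) (Fin (2 * l)) ℤ_[p], IwahoriPlus p (2 * l) g →
      affineChar p (2 * l) (by omega) ψ s (thetaInv p l g) =
        affineChar p (2 * l) (by omega) ψ s g) ↔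
    (∀ j : Fin (l - 1), (p : ℤ_[p]) ∣
      (s ⟨j, by have := j.isLt; omega⟩ + s ⟨2 * l - 2 - (j : ℕ), by omega⟩)) := by
  constructor
  · intro H j
    have hj : (j:ℕ) < l - 1 := j.isLt
    set a : ℤ_[p] := s ⟨(j:ℕ), by omega⟩ + s ⟨2*l-2-(j:ℕ), by omega⟩ with ha
    show (p:ℤ_[p]) ∣ a
    by_contra hnd
    have haU : IsUnit a := by
      by_contra hU
      apply hnd
      have h1 : a ∈ nonunits ℤ_[p] := hU
      have h2 : a ∈ IsLocalRing.maximalIdeal ℤ_[p] := h1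
      rw [PadicInt.maximalIdeal_eq_span_p, Ideal.mem_span_singleton] at h2
      exact h2
    have key : ∀ x : ℤ_[p], ψ (((-a * x : ℤ_[p]) : ℚ_[p])) = 1 := by
      intro x
      have hRC : ((⟨(j:ℕ), by omega⟩ : Fin (2*l)) : ℕ) < ((⟨(j:ℕ)+1, by omega⟩ : Fin (2*l)) : ℕ) := by
        simp only [Fin.val_mk]; omega
      set gx : Matrix (Fin (2*l)) (Fin (2*l)) ℤ_[p] :=
        1 + elemMat p (2*l) ⟨(j:ℕ), by omega⟩ ⟨(j:ℕ)+1, by omega⟩ x with hgx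
      have hgxI : IwahoriPlus p (2*l) gx :=
        iwahori_one_add_elem ⟨(j:ℕ), by omega⟩ ⟨(j:ℕ)+1, by omega⟩ hRC x
      have hSS : SSz p l s gx = -a * x := by
        rw [SSz]
        rw [Finset.sum_eq_single (⟨(j:ℕ), by omega⟩ : Fin (2*l-1))]
        · have hval : gx (loIx l ⟨(j:ℕ), by omega⟩) (hiIx l ⟨(j:ℕ), by omega⟩) = x := by
            rw [hgx, one_add_elem_offdiag _ _ _ _ _ (Fin.ne_of_val_ne (by simp only [loIx, hiIx, Fin.val_mk]; omega))]
            rw [if_pos ⟨Fin.ext (by simp only [loIx, Fin.val_mk]), Fin.ext (by simp only [hiIx, Fin.val_mk])⟩]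
          rw [hval, ccz, if_neg (by simp only [Fin.val_mk]; omega)]
          have e1 : loIx l ⟨(j:ℕ), by omega⟩ = (⟨(j:ℕ), by omega⟩ : Fin (2*l)) :=
            Fin.ext (by simp only [loIx, Fin.val_mk])
          have e2 : loIx l (tauIx l ⟨(j:ℕ), by omega⟩) = (⟨2*l-2-(j:ℕ), by omega⟩ : Fin (2*l)) :=
            Fin.ext (by simp only [loIx, tauIx, Fin.val_mk])
          rw [e1, e2, ha]
        · intro b _ hb
          have hb' : ¬(loIx l b = (⟨(j:ℕ), by omega⟩ : Fin (2*l))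
              ∧ hiIx l b = (⟨(j:ℕ)+1, by omega⟩ : Fin (2*l))) := by
            rintro ⟨h1, -⟩
            have := congrArg Fin.val h1
            simp only [loIx, Fin.val_mk] at this
            exact hb (Fin.ext this)
          rw [hgx, one_add_elem_offdiag _ _ _ _ _
            (Fin.ne_of_val_ne (by simp only [loIx, hiIx, Fin.val_mk]; omega)), if_neg hb', mul_zero]
        · intro hmem
          exact absurd (Finset.mem_univ _) hmem
      have hcancel : affineChar p (2*l) (by omega) ψ s gx * ψ ((SSz p l s gx : ℚ_[p]))
          = affineChar p (2*l) (by omega) ψ s gx :=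
        (affineChar_theta p l hl ψ hψ s gx hgxI).symm.trans (H gx hgxI)
      have h1 : ψ ((SSz p l s gx : ℚ_[p])) = 1 := mul_eq_left.mp hcancel
      rwa [hSS] at h1
    obtain ⟨y, hy⟩ := hψ'
    obtain ⟨b, hb⟩ := isUnit_iff_exists_inv.mp haU
    have h2 := key (-(b * y))
    have e : -a * -(b * y) = y := by linear_combination y * hb
    rw [e] at h2
    exact hy h2
  · intro hdvd g hg
    rw [affineChar_theta p l hl ψ hψ s g hg]
    have hSS : (p:ℤ_[p]) ∣ SSz p l s g := by
      rw [SSz]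
      refine Finset.dvd_sum (fun i _ => ?_)
      refine Dvd.dvd.mul_right ?_ _
      rw [ccz]
      by_cases h : (i:ℕ) = l-1
      · rw [if_pos h]; exact dvd_zero _
      · rw [if_neg h]
        refine dvd_neg.mpr ?_
        have hlt := i.isLt
        rcases Nat.lt_or_ge (i:ℕ) (l-1) with hc | hc
        · exact hdvd ⟨(i:ℕ), hc⟩
        · have h2 : (2*l-2-(i:ℕ)) < l-1 := by omega
          have hthis := hdvd ⟨2*l-2-(i:ℕ), h2⟩
          have e : (⟨2*l-2-(2*l-2-(i:ℕ)), by omega⟩ : Fin (2*l)) = ⟨(i:ℕ), by omega⟩ :=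
            Fin.ext (by simp only [Fin.val_mk]; omega)
          rw [e] at hthis
          rw [add_comm]
          exact hthis
    obtain ⟨w, hw⟩ := hSS
    have e : ((SSz p l s g : ℤ_[p]) : ℚ_[p]) = (p:ℚ_[p]) * (w:ℚ_[p]) := by
      rw [hw]; push_cast; ring
    rw [e, hψ w, mul_one]
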